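/- Let (b_n)_{n≥0} satisfy b_0 = 1, b_n | b_{n+1}, b_n ≠ b_{n+1}, and suppose the sequence (b_{n+1}/b_n) is unbounded. Let τ_{(b_nZ)} be the linear topology on Z with neighbourhood basis {b_n Z} and let τ_S be the topology of uniform convergence on S = {1/b_n + Z : n ∈ N} ⊆ T. Then the sequence l_j = b_j · ⌊b_{j+1}/(2 b_j)⌋ converges to 0 in τ_{(b_nZ)} but not in τ_S; consequently τ_S ≠ τ_{(b_nZ)}. -/

import Mathlib

/-- `T_m = [-1/(4m), 1/(4m)] + ℤ` inside the circle `𝕋 = ℝ/ℤ`. -/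
def Tm (m : ℕ) : Set (AddCircle (1 : ℝ)) :=
  {z | ∃ r : ℝ, |r| ≤ 1 / (4 * m) ∧ (r : AddCircle (1 : ℝ)) = z}

/-- Let `(b_n)` satisfy `b_0 = 1`, `b_n ∣ b_{n+1}`, `b_n ≠ b_{n+1}` with `(b_{n+1}/b_n)`
unbounded.  The sequence `l_j = b_j ⌊b_{j+1}/(2 b_j)⌋` converges to `0` in the linear
topology `τ_{(b_n ℤ)}` (for every `n`, eventually `b_n ∣ l_j`), but does not converge to `0`
in the topology `τ_S` of uniform convergence on `S = {1/b_n + ℤ}`; hence `τ_S ≠ τ_{(b_n ℤ)}`. -/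
theorem linear_ne_S_topology (b : ℕ → ℕ) (hb0 : b 0 = 1)
    (hdvd : ∀ n, b n ∣ b (n + 1)) (hne : ∀ n, b n ≠ b (n + 1))
    (hub : ∀ C : ℝ, ∃ n : ℕ, C < (b (n + 1) : ℝ) / (b n : ℝ)) :
    (∀ n : ℕ, ∃ J : ℕ, ∀ j ≥ J,
        (b n : ℤ) ∣ (b j : ℤ) * ⌊(b (j + 1) : ℝ) / (2 * (b j : ℝ))⌋) ∧
    ¬ (∀ m : ℕ, 0 < m → ∃ J : ℕ, ∀ j ≥ J, ∀ n : ℕ,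
        ((((b j : ℝ) * (⌊(b (j + 1) : ℝ) / (2 * (b j : ℝ))⌋ : ℝ)) / (b n : ℝ) : ℝ) :
          AddCircle (1 : ℝ)) ∈ Tm m) := by
  have hbne : ∀ n, b n ≠ 0 := by
    intro n h0
    have : b (n + 1) = 0 := by
      have := hdvd n; rw [h0] at this; exact Nat.eq_zero_of_zero_dvd this
    exact hne n (h0.trans this.symm)
  have hbpos : ∀ n, 0 < (b n : ℝ) := fun n => by
    exact_mod_cast Nat.pos_of_ne_zero (hbne n)
  have hmono : ∀ n j, n ≤ j → b n ∣ b j := by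
    intro n j hnj
    induction j with
    | zero => simpa [Nat.le_zero.mp hnj]
    | succ k ih =>
      rcases Nat.lt_or_ge n (k + 1) with h | h
      · exact (ih (Nat.lt_succ_iff.mp h)).trans (hdvd k)
      · have : n = k + 1 := le_antisymm hnj h
        simp [this]
  constructor
  · intro n
    exact ⟨n, fun j hj =>
      Dvd.dvd.mul_right (Int.natCast_dvd_natCast.mpr (hmono n j hj)) _⟩
  · intro h
    obtain ⟨J, hJ⟩ := h 1 one_pos
    set C : ℝ := 16 + ∑ i ∈ Finset.range J, ((b (i + 1) : ℝ) / (b i : ℝ)) with hC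
    have hCsum : ∀ i < J, (b (i + 1) : ℝ) / (b i : ℝ) ≤ C := by
      intro i hi
      have h1 : (b (i + 1) : ℝ) / (b i : ℝ) ≤
          ∑ i ∈ Finset.range J, ((b (i + 1) : ℝ) / (b i : ℝ)) :=
        Finset.single_le_sum (f := fun i => (b (i + 1) : ℝ) / (b i : ℝ))
          (fun i _ => by positivity) (Finset.mem_range.mpr hi)
      linarith
    have hC16 : (16 : ℝ) ≤ C := by
      have : (0 : ℝ) ≤ ∑ i ∈ Finset.range J, ((b (i + 1) : ℝ) / (b i : ℝ)) :=
        Finset.sum_nonneg fun i _ => by positivity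
      rw [hC]; linarith
    obtain ⟨n, hn⟩ := hub C
    have hnJ : J ≤ n := by
      by_contra hlt
      exact absurd (hCsum n (Nat.lt_of_not_le hlt)) (not_le.mpr hn)
    obtain ⟨q, hq⟩ := hdvd n
    have hqR : (b (n + 1) : ℝ) = (b n : ℝ) * q := by exact_mod_cast congrArg Nat.cast hq
    have hbn := hbpos n
    have hq16 : (16 : ℝ) < (q : ℝ) := by
      have : (b (n + 1) : ℝ) / (b n : ℝ) = (q : ℝ) := by
        rw [hqR]; field_simp
      rw [this] at hn; linarith
    have hqpos : (0 : ℝ) < q := by linarith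
    -- the real value in question, for j = n and the test point 1/b (n+1)
    obtain ⟨r, hr, hre⟩ := hJ n hnJ (n + 1)
    set f : ℤ := ⌊(b (n + 1) : ℝ) / (2 * (b n : ℝ))⌋ with hf
    have harg : (b (n + 1) : ℝ) / (2 * (b n : ℝ)) = (q : ℝ) / 2 := by
      rw [hqR]; field_simp
    have hfle : (f : ℝ) ≤ (q : ℝ) / 2 := by
      rw [hf, harg]; exact Int.floor_le _
    have hflt : (q : ℝ) / 2 - 1 < (f : ℝ) := by
      have := Int.lt_floor_add_one ((q : ℝ) / 2)
      rw [hf, harg]; linarith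
    set x : ℝ := ((b n : ℝ) * (f : ℝ)) / (b (n + 1) : ℝ) with hx
    have hxval : x = (f : ℝ) / (q : ℝ) := by
      rw [hx, hqR]; field_simp
    have hxub : x ≤ 1 / 2 := by
      rw [hxval, div_le_iff₀ hqpos]; linarith
    have hxlb : 7 / 16 < x := by
      rw [hxval, lt_div_iff₀ hqpos]
      have h1q : (q : ℝ)⁻¹ < 1 / 16 := by
        rw [inv_lt_iff_one_lt_mul₀ hqpos]; linarith
      nlinarith
    -- unfold the circle equality
    have : (-r + x : ℝ) ∈ AddSubgroup.zmultiples (1 : ℝ) := QuotientAddGroup.eq.mp hre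
    obtain ⟨k, hk⟩ := AddSubgroup.mem_zmultiples_iff.mp this
    have hk' : x - r = (k : ℝ) := by
      have : (k : ℝ) = -r + x := by simpa using hk
      linarith
    have habs := abs_le.mp hr
    have hr4 : |r| ≤ 1 / 4 := by
      have : (1 : ℝ) / (4 * (1 : ℕ)) = 1 / 4 := by norm_num
      rwa [this] at hr
    have habs4 := abs_le.mp hr4
    rcases le_or_gt (k : ℝ) 0 with hk0 | hk1
    · linarith
    · have : (1 : ℝ) ≤ (k : ℝ) := by exact_mod_cast (by exact_mod_cast hk1 : (0 : ℤ) < k)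
      linarith
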